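/- Let x = x(t) be a differentiable function on an open interval satisfying the implicit equation e^{a·x(t)} · μ′(x(t))^{−1/2} = t, where μ is a smooth function with μ′ > 0 satisfying μ′ = ½ μ² + d for a constant d. Then x satisfies the second-order ODE ẍ(t) = λ₁ t ẋ(t)³ + λ₂ ẋ(t)², with λ₁ = a² + d/2 and λ₂ = −2a. -/

import Mathlib

/-- if `x` satisfies the implicit equation `e^{a x(t)} (μ'(x(t)))^{-1/2} = t`
where `μ' > 0` and `μ' = ½ μ² + d`, then `x` satisfies the Tachibana–Liu type ODE
`ẍ = (a² + d/2) t ẋ³ - 2a ẋ²`. -/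
theorem implicit_potential_tachibana_liu_ode
    (a d : ℝ) (I Jμ : Set ℝ) (hIo : IsOpen I) (hI : I ⊆ Set.Ioi 0)
    (hJo : IsOpen Jμ)
    (μ μ' : ℝ → ℝ)
    (hμ : ∀ s ∈ Jμ, HasDerivAt μ (μ' s) s)
    (hμpos : ∀ s ∈ Jμ, 0 < μ' s)
    (hμode : ∀ s ∈ Jμ, μ' s = (1 / 2) * (μ s) ^ 2 + d)
    (x x' x'' : ℝ → ℝ)
    (hx : ∀ t ∈ I, HasDerivAt x (x' t) t)
    (hx' : ∀ t ∈ I, HasDerivAt x' (x'' t) t)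
    (hrange : ∀ t ∈ I, x t ∈ Jμ)
    (himp : ∀ t ∈ I, Real.exp (a * x t) / Real.sqrt (μ' (x t)) = t) :
    ∀ t ∈ I, x'' t = (a ^ 2 + d / 2) * t * (x' t) ^ 3 + (-(2 * a)) * (x' t) ^ 2 := by
  -- μ' is differentiable with derivative μ * μ'
  have hμ'd : ∀ s ∈ Jμ, HasDerivAt μ' (μ s * μ' s) s := by
    intro s hs
    have h1 : HasDerivAt (fun y => (1/2 : ℝ) * μ y ^ 2 + d) (μ s * μ' s) s := by
      have := (((hμ s hs).pow 2).const_mul (1/2 : ℝ)).add_const d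
      exact this.congr_deriv (by norm_num <;> ring)
    refine h1.congr_of_eventuallyEq ?_
    filter_upwards [hJo.mem_nhds hs] with y hy
    exact hμode y hy
  -- first differentiation of the implicit equation
  have eq1 : ∀ t ∈ I, t * x' t * (a - μ (x t) / 2) = 1 := by
    intro t ht
    have hX : x t ∈ Jμ := hrange t ht
    have hP : 0 < μ' (x t) := hμpos _ hX
    have hS : 0 < Real.sqrt (μ' (x t)) := Real.sqrt_pos.mpr hP
    have hSsq : Real.sqrt (μ' (x t)) ^ 2 = μ' (x t) := Real.sq_sqrt hP.le
    have hE : HasDerivAt (fun t => Real.exp (a * x t)) (Real.exp (a * x t) * (a * x' t)) t :=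
      ((hx t ht).const_mul a).exp
    have hC : HasDerivAt (fun t => μ' (x t)) (μ (x t) * μ' (x t) * x' t) t := by
      have := (hμ'd _ hX).comp t (hx t ht)
      exact this
    have hSd : HasDerivAt (fun t => Real.sqrt (μ' (x t)))
        (1 / (2 * Real.sqrt (μ' (x t))) * (μ (x t) * μ' (x t) * x' t)) t :=
      (Real.hasDerivAt_sqrt hP.ne').comp t hC
    have hD := hE.div hSd hS.ne'
    have hid : HasDerivAt (fun t => Real.exp (a * x t) / Real.sqrt (μ' (x t))) 1 t := by
      refine (hasDerivAt_id t).congr_of_eventuallyEq ?_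
      filter_upwards [hIo.mem_nhds ht] with y hy
      exact himp y hy
    have hone := hD.unique hid
    have hEts : Real.exp (a * x t) = t * Real.sqrt (μ' (x t)) := by
      have h := himp t ht
      rw [div_eq_iff hS.ne'] at h
      exact h
    rw [hEts] at hone
    field_simp at hone
    have hne : (2 * Real.sqrt (μ' (x t)) * μ' (x t)) ≠ 0 :=
      ne_of_gt (mul_pos (mul_pos two_pos hS) hP)
    have h2 : (2 * Real.sqrt (μ' (x t)) * μ' (x t)) * (t * x' t * (a - μ (x t) / 2)) =
        (2 * Real.sqrt (μ' (x t)) * μ' (x t)) * 1 := by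
      linear_combination Real.sqrt (μ' (x t)) * hone - (2 * a * t * x' t * Real.sqrt (μ' (x t)) - 2 * Real.sqrt (μ' (x t))) * hSsq
    exact mul_left_cancel₀ hne h2
  intro t ht
  have hX : x t ∈ Jμ := hrange t ht
  have ht0 : (0:ℝ) < t := hI ht
  have h1 := eq1 t ht
  have hx'ne : x' t ≠ 0 := by
    intro h
    rw [h] at h1; simp at h1
  have hμX : HasDerivAt (fun t => μ (x t)) (μ' (x t) * x' t) t := (hμ _ hX).comp t (hx t ht)
  have hG : HasDerivAt (fun t => t * x' t * (a - μ (x t) / 2))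
      ((1 * x' t + t * x'' t) * (a - μ (x t) / 2) + t * x' t * (-(μ' (x t) * x' t / 2))) t :=
    ((hasDerivAt_id t).mul (hx' t ht)).mul ((hμX.div_const 2).const_sub a)
  have hG0 : HasDerivAt (fun t => t * x' t * (a - μ (x t) / 2)) 0 t := by
    refine (hasDerivAt_const t (1:ℝ)).congr_of_eventuallyEq ?_
    filter_upwards [hIo.mem_nhds ht] with y hy
    exact eq1 y hy
  have eq2 := hG.unique hG0
  have hM : μ (x t) = 2 * a - 2 / (t * x' t) := by
    have htx : t * x' t ≠ 0 := mul_ne_zero ht0.ne' hx'ne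
    field_simp
    linarith [h1]
  rw [hμode _ hX, hM] at eq2
  have htx : t * x' t ≠ 0 := mul_ne_zero ht0.ne' hx'ne
  field_simp at eq2
  have h8 : (8 * t ^ 3 * (x' t) ^ 2) ≠ 0 :=
    mul_ne_zero (by positivity) (pow_ne_zero _ hx'ne)
  have key : (8 * t ^ 3 * (x' t) ^ 2) * x'' t =
      (8 * t ^ 3 * (x' t) ^ 2) * ((a ^ 2 + d / 2) * t * (x' t) ^ 3 + (-(2 * a)) * (x' t) ^ 2) := by
    linear_combination (4 * t ^ 2 * x' t ^ 2) * eq2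
  exact mul_left_cancel₀ h8 key
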